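/- Let X be a metric space and Y a vector space with a complete shift-invariant metric, F₁, F₂ : X ⇒ Y set-valued maps, and x̄ ∈ X, ȳ₁ ∈ F₁(x̄), ȳ₂ ∈ F₂(x̄). Assume: (i) Graph F₁ and Graph F₂ are locally complete around (x̄, ȳ₁) and (x̄, ȳ₂); (ii) F₁ is metrically regular around (x̄, ȳ₁) with constant l > 0; (iii) F₂ has the Aubin property around (x̄, ȳ₂) with constant m > 0; (iv) lm < 1. Then there exists ε > 0 such that for every ρ ∈ (0, ε), B(ȳ₁ − ȳ₂, (l⁻¹ − m)ρ) ⊆ (F₁ − F₂)(B(x̄, ρ)), where (F₁ − F₂)(x) := {y₁ − y₂ : y₁ ∈ F₁(x), y₂ ∈ F₂(x)}. -/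

import Mathlib

open Metric Set Filter Topology ENNReal

noncomputable def exc {α : Type*} [PseudoEMetricSpace α] (A B : Set α) : ℝ≥0∞ :=
  ⨆ a ∈ A, EMetric.infEdist a B

private lemma geom_sum_le_inv_one_sub' {x : ℝ} (h0 : 0 ≤ x) (h1 : x < 1) (n : ℕ) :
    ∑ k ∈ Finset.range n, x ^ k ≤ (1 - x)⁻¹ := by
  have hx : (0:ℝ) ≤ x ^ n := pow_nonneg h0 n
  have h2 : (0:ℝ) < 1 - x := by linarith
  rw [geom_sum_eq h1.ne n]
  have : (x ^ n - 1) / (x - 1) = (1 - x ^ n) / (1 - x) := by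
    rw [← neg_div_neg_eq]; ring_nf
  rw [this, inv_eq_one_div, div_le_div_iff₀ h2 h2]
  nlinarith

set_option maxHeartbeats 2000000 in
theorem stmt8 {X Y : Type*} [MetricSpace X] [AddCommGroup Y] [MetricSpace Y]
    (hshift : ∀ a b c : Y, dist (a + c) (b + c) = dist a b)
    (F₁ F₂ : X → Set Y) (x₀ : X) (y₁ y₂ : Y)
    (h1 : y₁ ∈ F₁ x₀) (h2 : y₂ ∈ F₂ x₀)
    (l m : ℝ) (hl : 0 < l) (hm : 0 < m) (hlm : l * m < 1)
    (hcomp1 : ∃ r > (0:ℝ),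
      IsComplete ({p : X × Y | p.2 ∈ F₁ p.1} ∩ Metric.closedBall (x₀, y₁) r))
    (hcomp2 : ∃ r > (0:ℝ),
      IsComplete ({p : X × Y | p.2 ∈ F₂ p.1} ∩ Metric.closedBall (x₀, y₂) r))
    (hreg : ∃ U ∈ 𝓝 x₀, ∃ V ∈ 𝓝 y₁, ∀ x ∈ U, ∀ y ∈ V,
      EMetric.infEdist x {x' | y ∈ F₁ x'} ≤
        ENNReal.ofReal l * EMetric.infEdist y (F₁ x))
    (hAub : ∃ U ∈ 𝓝 x₀, ∃ V ∈ 𝓝 y₂, ∀ x ∈ U, ∀ u ∈ U,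
      exc (F₂ x ∩ V) (F₂ u) ≤ ENNReal.ofReal (m * dist x u)) :
    ∃ ε > (0:ℝ), ∀ ρ ∈ Set.Ioo (0:ℝ) ε,
      Metric.ball (y₁ - y₂) ((l⁻¹ - m) * ρ) ⊆
        ⋃ x ∈ Metric.ball x₀ ρ, (fun p : Y × Y => p.1 - p.2) '' (F₁ x ×ˢ F₂ x) := by
  obtain ⟨r₁, hr₁, hc1⟩ := hcomp1
  obtain ⟨r₂, hr₂, hc2⟩ := hcomp2
  obtain ⟨U₁, hU₁, V₁, hV₁, hreg⟩ := hreg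
  obtain ⟨U₂, hU₂, V₂, hV₂, hAub⟩ := hAub
  obtain ⟨a, ha0, haU⟩ := Metric.mem_nhds_iff.1 (inter_mem hU₁ hU₂)
  obtain ⟨b₁, hb₁0, hbV₁⟩ := Metric.mem_nhds_iff.1 hV₁
  obtain ⟨b₂, hb₂0, hbV₂⟩ := Metric.mem_nhds_iff.1 hV₂
  have hlinv : (0:ℝ) < l⁻¹ := by positivity
  have hl1 : (1:ℝ) ≤ l⁻¹ + 1 := by linarith
  have hl0 : (0:ℝ) < l⁻¹ + 1 := by positivity
  have hm1 : (1:ℝ) ≤ m + 1 := by linarith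
  have hm0 : (0:ℝ) < m + 1 := by linarith
  have hml : m < l⁻¹ := by
    rw [← one_div, lt_div_iff₀ hl]
    linarith [mul_comm l m]
  obtain ⟨ε, hεdef⟩ : ∃ t : ℝ, t = min (min a (b₁ / (l⁻¹ + 1)))
      (min (b₂ / (m + 1)) (min (r₁ / (l⁻¹ + 1)) (r₂ / (m + 1)))) := ⟨_, rfl⟩
  have hε0 : 0 < ε := by
    rw [hεdef]
    refine lt_min (lt_min ha0 (by positivity)) (lt_min (by positivity) (lt_min (by positivity) (by positivity)))
  have hεa : ε ≤ a := hεdef ▸ (min_le_left _ _).trans (min_le_left _ _)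
  have hεb₁ : ε ≤ b₁ / (l⁻¹ + 1) := hεdef ▸ (min_le_left _ _).trans (min_le_right _ _)
  have hεb₂ : ε ≤ b₂ / (m + 1) := hεdef ▸ (min_le_right _ _).trans (min_le_left _ _)
  have hεr₁ : ε ≤ r₁ / (l⁻¹ + 1) := hεdef ▸ (min_le_right _ _).trans ((min_le_right _ _).trans (min_le_left _ _))
  have hεr₂ : ε ≤ r₂ / (m + 1) := hεdef ▸ (min_le_right _ _).trans ((min_le_right _ _).trans (min_le_right _ _))
  refine ⟨ε, hε0, ?_⟩
  rintro ρ ⟨hρ0, hρε⟩ y hy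
  rw [Metric.mem_ball] at hy
  obtain ⟨d, hd⟩ : ∃ t : ℝ, t = dist y (y₁ - y₂) := ⟨_, rfl⟩
  rw [← hd] at hy
  have hd0 : 0 ≤ d := hd ▸ dist_nonneg
  -- constants
  obtain ⟨q, hqdef⟩ : ∃ t : ℝ, t = (1 + l * m) / 2 := ⟨_, rfl⟩
  have hlm0 : 0 ≤ l * m := by positivity
  have hq0 : 0 < q := by rw [hqdef]; linarith
  have hlmq : l * m < q := by rw [hqdef]; linarith
  have hq1 : q < 1 := by rw [hqdef]; linarith
  obtain ⟨K, hKdef⟩ : ∃ t : ℝ, t = 1 + (l + 1) / (q - l * m) := ⟨_, rfl⟩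
  have hqlm0 : 0 < q - l * m := by linarith
  have hK1 : 1 ≤ K := by
    rw [hKdef]
    have : 0 ≤ (l + 1) / (q - l * m) := by positivity
    linarith
  have hK0 : 0 < K := by linarith
  have hS₁ρ : l * d / (1 - l * m) < ρ := by
    rw [div_lt_iff₀ (by linarith)]
    have hinv : l * l⁻¹ = 1 := mul_inv_cancel₀ hl.ne'
    have hinv2 : l * (l⁻¹ * ρ) = ρ := by rw [← mul_assoc, hinv, one_mul]
    have h5 := mul_lt_mul_of_pos_left hy hl
    have h6 : l * ((l⁻¹ - m) * ρ) = l * (l⁻¹ * ρ) - l * m * ρ := by ring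
    have h7 : l * m * ρ < ρ := by
      have := mul_lt_mul_of_pos_right hlm hρ0
      linarith
    linarith
  obtain ⟨δ, hδdef⟩ : ∃ t : ℝ, t = ρ - l * d / (1 - l * m) := ⟨_, rfl⟩
  have hδ0 : 0 < δ := by rw [hδdef]; linarith
  obtain ⟨c, hcdef⟩ : ∃ t : ℝ, t = min (ε * (1 - q)) (δ * (1 - q) / (2 * K)) := ⟨_, rfl⟩
  have hq1' : (0:ℝ) < 1 - q := by linarith
  have hc0 : 0 < c := hcdef ▸ lt_min (mul_pos hε0 hq1') (div_pos (mul_pos hδ0 hq1') (by positivity))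
  obtain ⟨C, hCdef⟩ : ∃ t : ℝ, t = c * K := ⟨_, rfl⟩
  have hC0 : 0 < C := by rw [hCdef]; positivity
  have hcC : c ≤ C := hCdef ▸ le_mul_of_one_le_right hc0.le hK1
  obtain ⟨B, hBdef⟩ : ∃ t : ℝ, t = l * d := ⟨_, rfl⟩
  have hB0 : 0 ≤ B := by rw [hBdef]; positivity
  obtain ⟨α, hαdef⟩ : ∃ t : ℕ → ℝ, t = fun n => B * (l * m) ^ n + C * q ^ n := ⟨_, rfl⟩
  have hαe : ∀ n, α n = B * (l * m) ^ n + C * q ^ n := fun n => by rw [hαdef]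
  obtain ⟨β, hβdef⟩ : ∃ t : ℕ → ℝ, t = fun n => m * α n + c * q ^ n := ⟨_, rfl⟩
  have hβe : ∀ n, β n = m * α n + c * q ^ n := fun n => by rw [hβdef]
  have hα0 : ∀ n, 0 ≤ α n := fun n => by
    rw [hαe n]
    have := pow_nonneg hlm0 n; have := pow_nonneg hq0.le n; positivity
  have hβ0 : ∀ n, 0 < β n := fun n => by
    rw [hβe n]
    have h1 := hα0 n; have h2 := pow_pos hq0 n; positivity
  obtain ⟨S, hSdef⟩ : ∃ t : ℝ, t = B / (1 - l * m) + C / (1 - q) := ⟨_, rfl⟩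
  have hSsum : ∀ n, ∑ k ∈ Finset.range n, α k ≤ S := by
    intro n
    have e : ∑ k ∈ Finset.range n, α k
        = B * ∑ k ∈ Finset.range n, (l * m) ^ k + C * ∑ k ∈ Finset.range n, q ^ k := by
      rw [Finset.mul_sum, Finset.mul_sum, ← Finset.sum_add_distrib]
      exact Finset.sum_congr rfl fun k _ => hαe k
    rw [e, hSdef, div_eq_mul_inv, div_eq_mul_inv]
    gcongr
    · exact geom_sum_le_inv_one_sub' hlm0 hlm n
    · exact geom_sum_le_inv_one_sub' hq0.le hq1 n
  have hSρ : S < ρ := by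
    have h1 : C / (1 - q) ≤ δ / 2 := by
      rw [div_le_iff₀ (by linarith)]
      have h2 : c ≤ δ * (1 - q) / (2 * K) := hcdef ▸ min_le_right _ _
      have : C ≤ (δ * (1 - q) / (2 * K)) * K := by
        rw [hCdef]; exact mul_le_mul_of_nonneg_right h2 hK0.le
      calc C ≤ (δ * (1 - q) / (2 * K)) * K := this
        _ = δ / 2 * (1 - q) := by field_simp
    have : B / (1 - l * m) = ρ - δ := by rw [hδdef, hBdef]; ring
    rw [hSdef, this]; linarith
  have hS0 : 0 ≤ S := by
    have := hSsum 1
    have h0 := hα0 0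
    simp only [Finset.range_one, Finset.sum_singleton] at this
    linarith
  have hcq : c / (1 - q) ≤ ε := by
    rw [div_le_iff₀ (by linarith)]
    calc c ≤ ε * (1 - q) := hcdef ▸ min_le_left _ _
      _ = ε * (1 - q) := rfl
  obtain ⟨T, hTdef⟩ : ∃ t : ℝ, t = m * S + ε := ⟨_, rfl⟩
  have hTsum : ∀ n, ∑ k ∈ Finset.range n, β k ≤ T := by
    intro n
    have e : ∑ k ∈ Finset.range n, β k
        = m * ∑ k ∈ Finset.range n, α k + c * ∑ k ∈ Finset.range n, q ^ k := by
      rw [Finset.mul_sum, Finset.mul_sum, ← Finset.sum_add_distrib]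
      exact Finset.sum_congr rfl fun k _ => hβe k
    rw [e, hTdef]
    have h1 : m * ∑ k ∈ Finset.range n, α k ≤ m * S :=
      mul_le_mul_of_nonneg_left (hSsum n) hm.le
    have h2 : c * ∑ k ∈ Finset.range n, q ^ k ≤ c * (1 - q)⁻¹ :=
      mul_le_mul_of_nonneg_left (geom_sum_le_inv_one_sub' hq0.le hq1 n) hc0.le
    have h3 : c * (1 - q)⁻¹ ≤ ε := by rw [← div_eq_mul_inv]; exact hcq
    linarith
  have hmSε : m * S < m * ε := mul_lt_mul_of_pos_left (hSρ.trans hρε) hm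
  have hdT : d + T < (l⁻¹ + 1) * ε := by
    have h6 : d < (l⁻¹ - m) * ε :=
      hy.trans_le (mul_le_mul_of_nonneg_left hρε.le (by linarith))
    have hexp : (l⁻¹ + 1) * ε = (l⁻¹ - m) * ε + m * ε + ε := by ring
    linarith [hTdef.le, hTdef.ge]
  have hT2 : T < (m + 1) * ε := by
    have hexp : (m + 1) * ε = m * ε + ε := by ring
    linarith [hTdef.le, hTdef.ge]
  -- γ sequence
  obtain ⟨γ, hγdef⟩ : ∃ t : ℕ → ℝ, t = fun n => Nat.rec d (fun k _ => β k) n := ⟨_, rfl⟩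
  have hγze : γ 0 = d := by subst hγdef; rfl
  have hγse : ∀ n, γ (n + 1) = β n := fun n => by subst hγdef; rfl
  have hγ0 : ∀ n, 0 ≤ γ n := by
    intro n; cases n with
    | zero => rw [hγze]; exact hd0
    | succ k => rw [hγse]; exact (hβ0 k).le
  have hkey : ∀ n, l * γ n + c * q ^ n ≤ α n := by
    intro n
    cases n with
    | zero =>
      simp only [pow_zero, mul_one, hγze, hαe 0]
      rw [hBdef]; linarith
    | succ k =>
      rw [hγse]
      have hqk : 0 ≤ q ^ k := pow_nonneg hq0.le k
      have hscl : l * m * C + (l + q) * c ≤ q * C := by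
        have hKe : (q - l * m) * K = (q - l * m) + (l + 1) := by
          rw [hKdef]; field_simp
        have h7 : (q - l * m) * C = c * ((q - l * m) + (l + 1)) := by
          rw [hCdef, ← hKe]; ring
        have h8 : c * (l * m) ≤ c * 1 := mul_le_mul_of_nonneg_left hlm.le hc0.le
        linarith
      have e1 : α (k + 1) = l * m * (B * (l * m) ^ k) + q * (C * q ^ k) := by
        rw [hαe]; ring
      have e2 : l * β k + c * q ^ (k + 1)
          = l * m * (B * (l * m) ^ k) + (l * m * C + (l + q) * c) * q ^ k := by
        rw [hβe, hαe]; ring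
      rw [e1, e2]
      have h9 := mul_le_mul_of_nonneg_right hscl hqk
      have h10 : q * (C * q ^ k) = (q * C) * q ^ k := by ring
      linarith
  -- step lemma
  have hstep : ∀ n : ℕ, ∀ p : X × Y, p.2 ∈ F₂ p.1 →
      dist p.1 x₀ ≤ ∑ k ∈ Finset.range n, α k →
      dist p.2 y₂ ≤ ∑ k ∈ Finset.range n, β k →
      EMetric.infEdist (y + p.2) (F₁ p.1) ≤ ENNReal.ofReal (γ n) →
      ∃ p' : X × Y, (p'.2 ∈ F₂ p'.1 ∧
        dist p'.1 x₀ ≤ ∑ k ∈ Finset.range (n+1), α k ∧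
        dist p'.2 y₂ ≤ ∑ k ∈ Finset.range (n+1), β k ∧
        EMetric.infEdist (y + p'.2) (F₁ p'.1) ≤ ENNReal.ofReal (γ (n+1))) ∧
        dist p'.1 p.1 ≤ α n ∧ dist p'.2 p.2 ≤ β n ∧ y + p.2 ∈ F₁ p'.1 := by
    rintro n ⟨x, z⟩ hz hx hzd hinf
    simp only at hz hx hzd hinf ⊢
    have hxS : dist x x₀ ≤ S := hx.trans (hSsum n)
    have hxball : x ∈ Metric.ball x₀ a :=
      mem_ball.2 (hxS.trans_lt (hSρ.trans (hρε.trans_le hεa)))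
    have hxU := haU hxball
    have hzT : dist z y₂ ≤ T := hzd.trans (hTsum n)
    have e2 : dist (y + y₂) y₁ = d := by
      conv_lhs => rw [show y₁ = (y₁ - y₂) + y₂ from (sub_add_cancel y₁ y₂).symm]
      rw [hshift y (y₁ - y₂) y₂]; exact hd.symm
    have e1 : dist (y + z) (y + y₂) = dist z y₂ := by
      rw [add_comm y z, add_comm y y₂]; exact hshift z y₂ y
    have hyzd : dist (y + z) y₁ ≤ dist z y₂ + d := by
      calc dist (y + z) y₁ ≤ dist (y + z) (y + y₂) + dist (y + y₂) y₁ := dist_triangle _ _ _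
        _ = dist z y₂ + d := by rw [e1, e2]
    have hyzV : y + z ∈ V₁ := by
      apply hbV₁
      rw [mem_ball]
      calc dist (y + z) y₁ ≤ dist z y₂ + d := hyzd
        _ ≤ T + d := by linarith
        _ < (l⁻¹ + 1) * ε := by linarith
        _ ≤ b₁ := by rw [← le_div_iff₀' hl0]; exact hεb₁
    have hr := hreg x hxU.1 (y + z) hyzV
    have hpos : 0 < l * γ n + c * q ^ n := by
      have := hγ0 n; have := pow_pos hq0 n; positivity
    have hlt : EMetric.infEdist x {x' | y + z ∈ F₁ x'}
        < ENNReal.ofReal (l * γ n + c * q ^ n) := by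
      have hle2 : EMetric.infEdist x {x' | y + z ∈ F₁ x'} ≤ ENNReal.ofReal (l * γ n) := by
        refine hr.trans ?_
        calc ENNReal.ofReal l * EMetric.infEdist (y + z) (F₁ x)
            ≤ ENNReal.ofReal l * ENNReal.ofReal (γ n) := mul_le_mul_right hinf _
          _ = ENNReal.ofReal (l * γ n) := (ENNReal.ofReal_mul hl.le).symm
      refine lt_of_le_of_lt hle2 ((ENNReal.ofReal_lt_ofReal_iff hpos).2 ?_)
      linarith [mul_pos hc0 (pow_pos hq0 n)]
    obtain ⟨x', hx'F, hx'e⟩ := EMetric.infEdist_lt_iff.1 hlt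
    have hdx' : dist x' x ≤ α n := by
      rw [edist_dist] at hx'e
      have := (ENNReal.ofReal_lt_ofReal_iff_of_nonneg dist_nonneg).1 hx'e
      rw [dist_comm]
      exact le_trans this.le (hkey n)
    have hx'S : dist x' x₀ ≤ ∑ k ∈ Finset.range (n+1), α k := by
      rw [Finset.sum_range_succ]
      calc dist x' x₀ ≤ dist x' x + dist x x₀ := dist_triangle _ _ _
        _ ≤ ∑ k ∈ Finset.range n, α k + α n := by linarith
    have hx'ball : x' ∈ Metric.ball x₀ a :=
      mem_ball.2 ((hx'S.trans (hSsum (n+1))).trans_lt (hSρ.trans (hρε.trans_le hεa)))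
    have hzV₂ : z ∈ V₂ := by
      apply hbV₂
      rw [mem_ball]
      calc dist z y₂ ≤ T := hzT
        _ < (m + 1) * ε := hT2
        _ ≤ b₂ := by rw [← le_div_iff₀' hm0]; exact hεb₂
    have hA := hAub x hxU.2 x' (haU hx'ball).2
    have hzle : EMetric.infEdist z (F₂ x') ≤ ENNReal.ofReal (m * dist x x') := by
      refine le_trans ?_ hA
      exact le_iSup₂ (f := fun a _ => EMetric.infEdist a (F₂ x')) z ⟨hz, hzV₂⟩
    have hzlt : EMetric.infEdist z (F₂ x') < ENNReal.ofReal (β n) := by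
      refine lt_of_le_of_lt hzle ?_
      refine (ENNReal.ofReal_lt_ofReal_iff (hβ0 n)).2 ?_
      have h4 : m * dist x x' ≤ m * α n := by
        rw [dist_comm]; exact mul_le_mul_of_nonneg_left hdx' hm.le
      rw [hβe]
      linarith [mul_pos hc0 (pow_pos hq0 n)]
    obtain ⟨z', hz'F, hz'e⟩ := EMetric.infEdist_lt_iff.1 hzlt
    have hdz' : dist z' z ≤ β n := by
      rw [edist_dist] at hz'e
      have := (ENNReal.ofReal_lt_ofReal_iff_of_nonneg dist_nonneg).1 hz'e
      rw [dist_comm]; exact this.le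
    refine ⟨(x', z'), ⟨hz'F, hx'S, ?_, ?_⟩, hdx', hdz', hx'F⟩
    · rw [Finset.sum_range_succ]
      calc dist z' y₂ ≤ dist z' z + dist z y₂ := dist_triangle _ _ _
        _ ≤ ∑ k ∈ Finset.range n, β k + β n := by linarith
    · have hmem : y + z ∈ F₁ x' := hx'F
      calc EMetric.infEdist (y + z') (F₁ x') ≤ edist (y + z') (y + z) :=
            EMetric.infEdist_le_edist_of_mem hmem
        _ = ENNReal.ofReal (dist (y + z') (y + z)) := edist_dist _ _
        _ = ENNReal.ofReal (dist z' z) := by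
            rw [add_comm y z', add_comm y z, hshift z' z y]
        _ ≤ ENNReal.ofReal (γ (n+1)) := by
            rw [hγse]; exact ENNReal.ofReal_le_ofReal hdz'
  choose! f hInv hRel using hstep
  obtain ⟨u, hu⟩ : ∃ t : ℕ → X × Y, t = fun n => Nat.rec (x₀, y₂) (fun k p => f k p) n :=
    ⟨_, rfl⟩
  have hu0 : u 0 = (x₀, y₂) := by rw [hu]; rfl
  have huS : ∀ n, u (n + 1) = f n (u n) := fun n => by rw [hu]
  have hInvAll : ∀ n, (u n).2 ∈ F₂ (u n).1 ∧
      dist (u n).1 x₀ ≤ ∑ k ∈ Finset.range n, α k ∧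
      dist (u n).2 y₂ ≤ ∑ k ∈ Finset.range n, β k ∧
      EMetric.infEdist (y + (u n).2) (F₁ (u n).1) ≤ ENNReal.ofReal (γ n) := by
    intro n
    induction n with
    | zero =>
      rw [hu0]
      refine ⟨h2, by simp, by simp, ?_⟩
      calc EMetric.infEdist (y + y₂) (F₁ x₀) ≤ edist (y + y₂) y₁ :=
          EMetric.infEdist_le_edist_of_mem h1
        _ = ENNReal.ofReal (dist (y + y₂) y₁) := edist_dist _ _
        _ = ENNReal.ofReal (γ 0) := by
            rw [hγze]
            congr 1
            conv_lhs => rw [show y₁ = (y₁ - y₂) + y₂ from (sub_add_cancel y₁ y₂).symm]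
            rw [hshift y (y₁ - y₂) y₂]; exact hd.symm
    | succ k ih =>
      rw [huS]
      exact hInv k (u k) ih.1 ih.2.1 ih.2.2.1 ih.2.2.2
  have hRelAll : ∀ n, dist (u (n+1)).1 (u n).1 ≤ α n ∧
      dist (u (n+1)).2 (u n).2 ≤ β n ∧ y + (u n).2 ∈ F₁ (u (n+1)).1 := by
    intro n
    have := hRel n (u n) (hInvAll n).1 (hInvAll n).2.1 (hInvAll n).2.2.1 (hInvAll n).2.2.2
    rw [huS]
    exact this
  let xs : ℕ → X := fun n => (u n).1
  let zs : ℕ → Y := fun n => (u n).2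
  have hsumα : Summable α := by
    rw [hαdef]
    exact Summable.add ((summable_geometric_of_lt_one hlm0 hlm).mul_left B)
      ((summable_geometric_of_lt_one hq0.le hq1).mul_left C)
  have hsumβ : Summable β := by
    rw [hβdef]
    exact Summable.add (hsumα.mul_left m)
      ((summable_geometric_of_lt_one hq0.le hq1).mul_left c)
  have hcx : CauchySeq xs :=
    cauchySeq_of_dist_le_of_summable α (fun n => by rw [dist_comm]; exact (hRelAll n).1) hsumα
  have hcz : CauchySeq zs :=
    cauchySeq_of_dist_le_of_summable β (fun n => by rw [dist_comm]; exact (hRelAll n).2.1) hsumβ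
  have hcyz : CauchySeq (fun n => y + zs n) := by
    refine cauchySeq_of_dist_le_of_summable β (fun n => ?_) hsumβ
    rw [add_comm y (zs n), add_comm y (zs (n+1)), hshift (zs n) (zs (n+1)) y, dist_comm]
    exact (hRelAll n).2.1
  -- distance bounds for the sequences
  have hxsS : ∀ n, dist (xs n) x₀ ≤ S := fun n => (hInvAll n).2.1.trans (hSsum n)
  have hzsT : ∀ n, dist (zs n) y₂ ≤ T := fun n => (hInvAll n).2.2.1.trans (hTsum n)
  have hyz1 : ∀ n, dist (y + zs n) y₁ ≤ T + d := by
    intro n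
    have e2 : dist (y + y₂) y₁ = d := by
      conv_lhs => rw [show y₁ = (y₁ - y₂) + y₂ from (sub_add_cancel y₁ y₂).symm]
      rw [hshift y (y₁ - y₂) y₂]; exact hd.symm
    have e1 : dist (y + zs n) (y + y₂) = dist (zs n) y₂ := by
      rw [add_comm y (zs n), add_comm y y₂]; exact hshift (zs n) y₂ y
    calc dist (y + zs n) y₁ ≤ dist (y + zs n) (y + y₂) + dist (y + y₂) y₁ :=
        dist_triangle _ _ _
      _ = dist (zs n) y₂ + d := by rw [e1, e2]
      _ ≤ T + d := by linarith [hzsT n]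
  have hεle_r₁ : (l⁻¹ + 1) * ε ≤ r₁ := by rw [← le_div_iff₀' hl0]; exact hεr₁
  have hεle_r₂ : (m + 1) * ε ≤ r₂ := by rw [← le_div_iff₀' hm0]; exact hεr₂
  have hε_r₁ : ε ≤ r₁ :=
    le_trans (by linarith [mul_le_mul_of_nonneg_right hl1 hε0.le, one_mul ε]) hεle_r₁
  have hε_r₂ : ε ≤ r₂ :=
    le_trans (by linarith [mul_le_mul_of_nonneg_right hm1 hε0.le, one_mul ε]) hεle_r₂
  have hSε : S < ε := hSρ.trans hρε
  -- graph sequences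
  have hmem1 : ∀ n, (xs (n+1), y + zs n) ∈
      ({p : X × Y | p.2 ∈ F₁ p.1} ∩ Metric.closedBall (x₀, y₁) r₁) := by
    intro n
    refine ⟨(hRelAll n).2.2, ?_⟩
    rw [Metric.mem_closedBall, Prod.dist_eq]
    refine max_le ?_ ?_
    · exact (hxsS (n+1)).trans (hSε.le.trans hε_r₁)
    · exact (hyz1 n).trans (by linarith [hdT])
  have hmem2 : ∀ n, (xs n, zs n) ∈
      ({p : X × Y | p.2 ∈ F₂ p.1} ∩ Metric.closedBall (x₀, y₂) r₂) := by
    intro n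
    refine ⟨(hInvAll n).1, ?_⟩
    rw [Metric.mem_closedBall, Prod.dist_eq]
    refine max_le ?_ ?_
    · exact (hxsS n).trans (hSε.le.trans hε_r₂)
    · exact (hzsT n).trans (by linarith [hT2])
  have hcs1 : CauchySeq (fun n => (xs (n+1), y + zs n)) :=
    (hcx.comp_tendsto (Filter.tendsto_add_atTop_nat 1)).prodMk hcyz
  have hcs2 : CauchySeq (fun n => (xs n, zs n)) := hcx.prodMk hcz
  obtain ⟨pa, hpa, hlim1⟩ := cauchySeq_tendsto_of_isComplete hc1 hmem1 hcs1
  obtain ⟨pb, hpb, hlim2⟩ := cauchySeq_tendsto_of_isComplete hc2 hmem2 hcs2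
  have hlimx1 : Tendsto (fun n => xs (n+1)) atTop (𝓝 pa.1) :=
    ((continuous_fst.tendsto pa).comp hlim1 : )
  have hlimw : Tendsto (fun n => y + zs n) atTop (𝓝 pa.2) :=
    (continuous_snd.tendsto _).comp hlim1
  have hlimx2 : Tendsto xs atTop (𝓝 pb.1) := (continuous_fst.tendsto _).comp hlim2
  have hlimz : Tendsto zs atTop (𝓝 pb.2) := (continuous_snd.tendsto _).comp hlim2
  have hxeq : pa.1 = pb.1 :=
    tendsto_nhds_unique hlimx1 (hlimx2.comp (Filter.tendsto_add_atTop_nat 1))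
  have hlimw2 : Tendsto (fun n => y + zs n) atTop (𝓝 (y + pb.2)) := by
    rw [tendsto_iff_dist_tendsto_zero]
    have : (fun n => dist (y + zs n) (y + pb.2)) = fun n => dist (zs n) pb.2 := by
      funext n
      rw [add_comm y (zs n), add_comm y pb.2, hshift (zs n) pb.2 y]
    rw [this]
    exact tendsto_iff_dist_tendsto_zero.1 hlimz
  have hweq : pa.2 = y + pb.2 := tendsto_nhds_unique hlimw hlimw2
  have hdistb : dist pb.1 x₀ ≤ S :=
    le_of_tendsto (hlimx2.dist tendsto_const_nhds) (Eventually.of_forall hxsS)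
  have hF1 : y + pb.2 ∈ F₁ pb.1 := by
    have := hpa.1
    rw [Set.mem_setOf_eq, hweq, hxeq] at this
    exact this
  have hF2 : pb.2 ∈ F₂ pb.1 := hpb.1
  refine Set.mem_iUnion₂.2 ⟨pb.1, mem_ball.2 (hdistb.trans_lt hSρ), ?_⟩
  exact ⟨(y + pb.2, pb.2), ⟨hF1, hF2⟩, by simp⟩
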